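/- Let T be a tree that does not admit a perfect matching, and suppose in the Staller-start Maker-Breaker domination game on T Staller wins but needs at least 2 moves (i.e., 2 ≤ γ'_SMB(T) < ∞). If s_1 is an optimal first move of Staller, then there exists an optimal response d_1' of Dominator with d_1' adjacent to s_1 in T. -/

import Mathlib

open scoped Classical

open scoped Classical

noncomputable section

/-- Minimax value of the Maker–Breaker game on hypergraph with edge set `E`:
`mbVal E t M B` is the minimum number of further moves Maker needs to claim all
vertices of some hyperedge (Maker has claimed `M`, Breaker has claimed `B`,
`t = true` iff Maker moves next), under optimal play; `⊤` if Maker cannot win. -/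
def mbVal {V : Type} [Fintype V] (E : Set (Finset V)) :
    Bool → Finset V → Finset V → ℕ∞
  | true, M, B =>
      if ∃ e ∈ E, e ⊆ M then 0
      else ⨅ v ∈ Finset.univ \ (M ∪ B), (1 + mbVal E false (insert v M) B)
  | false, M, B =>
      if ∃ e ∈ E, e ⊆ M then 0
      else if Finset.univ \ (M ∪ B) = ∅ then ⊤
      else ⨆ v ∈ Finset.univ \ (M ∪ B), mbVal E true M (insert v B)
termination_by _t M B => (Finset.univ \ (M ∪ B)).card
decreasing_by
  all_goals
    apply Finset.card_lt_card
    rw [Finset.ssubset_iff_of_subset]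
    · refine ⟨v, ‹_›, by simp⟩
    · intro x hx
      simp only [Finset.mem_sdiff, Finset.mem_univ, true_and, Finset.mem_union,
        Finset.mem_insert] at hx ⊢
      tauto

/-- The closed neighborhood of `v` as a finset. -/
def closedNbhdFinset {V : Type} [Fintype V] (G : SimpleGraph V) (v : V) : Finset V :=
  Finset.univ.filter (fun w => w = v ∨ G.Adj v w)

/-- The closed neighborhood hypergraph of a graph. -/
def nbhdHyp {V : Type} [Fintype V] (G : SimpleGraph V) : Set (Finset V) :=
  Set.range (closedNbhdFinset G)

/-- `γ'_SMB(G)`: the number of moves Staller (= Maker on the closed neighborhood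
hypergraph, moving first) needs to win the Maker–Breaker domination game on `G`. -/
def gammaSMB' {V : Type} [Fintype V] (G : SimpleGraph V) : ℕ∞ :=
  mbVal (nbhdHyp G) true ∅ ∅

end


set_option linter.unusedSectionVars false

namespace MBAux
variable {V : Type} [Fintype V]

lemma freeM_lt {M B : Finset V} {v : V} (hv : v ∈ Finset.univ \ (M ∪ B)) :
    (Finset.univ \ (insert v M ∪ B)).card < (Finset.univ \ (M ∪ B)).card := by
  apply Finset.card_lt_card
  rw [Finset.ssubset_iff_of_subset]
  · exact ⟨v, hv, by simp⟩
  · intro x hx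
    simp only [Finset.mem_sdiff, Finset.mem_univ, true_and, Finset.mem_union,
      Finset.mem_insert] at hx ⊢
    tauto

lemma freeB_lt {M B : Finset V} {v : V} (hv : v ∈ Finset.univ \ (M ∪ B)) :
    (Finset.univ \ (M ∪ insert v B)).card < (Finset.univ \ (M ∪ B)).card := by
  apply Finset.card_lt_card
  rw [Finset.ssubset_iff_of_subset]
  · exact ⟨v, hv, by simp⟩
  · intro x hx
    simp only [Finset.mem_sdiff, Finset.mem_univ, true_and, Finset.mem_union,
      Finset.mem_insert] at hx ⊢
    tauto

/-- Edge monotonicity: more target edges only help Maker. -/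
lemma mono_edges_aux {E₁ E₂ : Set (Finset V)} (hE : E₁ ⊆ E₂) :
    ∀ (k : ℕ) (t : Bool) (M B : Finset V), (Finset.univ \ (M ∪ B)).card ≤ k →
      mbVal E₂ t M B ≤ mbVal E₁ t M B := by
  intro k
  induction k with
  | zero =>
    intro t M B hk
    cases t
    · -- false
      rw [mbVal, mbVal]
      by_cases h1 : ∃ e ∈ E₁, e ⊆ M
      · rw [if_pos h1, if_pos (h1.imp fun e he => ⟨hE he.1, he.2⟩)]
      · rw [if_neg h1]
        have hfree : Finset.univ \ (M ∪ B) = ∅ := Finset.card_eq_zero.mp (le_antisymm hk (Nat.zero_le _))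
        rw [if_pos hfree]
        split_ifs <;> simp
    · -- true
      rw [mbVal, mbVal]
      by_cases h1 : ∃ e ∈ E₁, e ⊆ M
      · rw [if_pos h1, if_pos (h1.imp fun e he => ⟨hE he.1, he.2⟩)]
      · rw [if_neg h1]
        have hfree : Finset.univ \ (M ∪ B) = ∅ := Finset.card_eq_zero.mp (le_antisymm hk (Nat.zero_le _))
        rw [hfree]
        split_ifs <;> simp
  | succ k ih =>
    intro t M B hk
    cases t
    · -- false
      rw [mbVal, mbVal]
      by_cases h2 : ∃ e ∈ E₂, e ⊆ M
      · rw [if_pos h2]; exact zero_le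
      · have h1 : ¬ ∃ e ∈ E₁, e ⊆ M := fun h => h2 (h.imp fun e he => ⟨hE he.1, he.2⟩)
        rw [if_neg h1, if_neg h2]
        by_cases hfree : Finset.univ \ (M ∪ B) = ∅
        · rw [if_pos hfree, if_pos hfree]
        · rw [if_neg hfree, if_neg hfree]
          refine iSup₂_le fun b hb => le_iSup₂_of_le b hb ?_
          exact ih true M (insert b B) (by have := freeB_lt hb; omega)
    · -- true
      rw [mbVal, mbVal]
      by_cases h2 : ∃ e ∈ E₂, e ⊆ M
      · rw [if_pos h2]; exact zero_le
      · have h1 : ¬ ∃ e ∈ E₁, e ⊆ M := fun h => h2 (h.imp fun e he => ⟨hE he.1, he.2⟩)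
        rw [if_neg h1, if_neg h2]
        refine le_iInf₂ fun v hv => iInf₂_le_of_le v hv ?_
        exact add_le_add_right (ih false (insert v M) B (by have := freeM_lt hv; omega)) 1

lemma mono_edges {E₁ E₂ : Set (Finset V)} (hE : E₁ ⊆ E₂) (t : Bool) (M B : Finset V) :
    mbVal E₂ t M B ≤ mbVal E₁ t M B :=
  mono_edges_aux hE _ t M B le_rfl


/-- An extra Breaker stone only helps Breaker. -/
lemma mono_B_aux (E : Set (Finset V)) :
    ∀ (k : ℕ) (t : Bool) (M B : Finset V) (x : V), x ∈ Finset.univ \ (M ∪ B) →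
      (Finset.univ \ (M ∪ B)).card ≤ k →
      mbVal E t M B ≤ mbVal E t M (insert x B) := by
  intro k
  induction k with
  | zero =>
    intro t M B x hx hk
    exfalso
    have : x ∈ Finset.univ \ (M ∪ B) := hx
    have := Finset.card_pos.mpr ⟨x, this⟩
    omega
  | succ k ih =>
    intro t M B x hx hk
    have hxM : x ∉ M := by
      simp only [Finset.mem_sdiff, Finset.mem_union] at hx; tauto
    have hxB : x ∉ B := by
      simp only [Finset.mem_sdiff, Finset.mem_union] at hx; tauto
    cases t
    · -- false
      rw [mbVal, mbVal]
      by_cases hw : ∃ e ∈ E, e ⊆ M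
      · rw [if_pos hw]; exact zero_le
      · rw [if_neg hw, if_neg hw]
        have hne : Finset.univ \ (M ∪ B) ≠ ∅ := Finset.nonempty_iff_ne_empty.mp ⟨x, hx⟩
        rw [if_neg hne]
        by_cases hR : Finset.univ \ (M ∪ insert x B) = ∅
        · rw [if_pos hR]; exact le_top
        · rw [if_neg hR]
          refine iSup₂_le fun b hb => ?_
          by_cases hbx : b = x
          · subst hbx
            obtain ⟨b', hb'⟩ := Finset.nonempty_iff_ne_empty.mpr hR
            refine le_trans (ih true M (insert b B) b' (by
                simp only [Finset.mem_sdiff, Finset.mem_union, Finset.mem_insert] at hb' ⊢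
                tauto)
              (by have := freeB_lt hb; omega)) ?_
            exact le_iSup₂_of_le b' hb' (le_of_eq rfl)
          · have hbfree : b ∈ Finset.univ \ (M ∪ insert x B) := by
              simp only [Finset.mem_sdiff, Finset.mem_union, Finset.mem_insert] at hb ⊢
              tauto
            refine le_trans (ih true M (insert b B) x (by
                simp only [Finset.mem_sdiff, Finset.mem_union, Finset.mem_insert] at hx ⊢
                tauto)
              (by have := freeB_lt hb; omega)) ?_
            rw [Finset.insert_comm]
            exact le_iSup₂_of_le b hbfree (le_of_eq rfl)
    · -- true
      rw [mbVal, mbVal]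
      by_cases hw : ∃ e ∈ E, e ⊆ M
      · rw [if_pos hw]; exact zero_le
      · rw [if_neg hw, if_neg hw]
        refine le_iInf₂ fun v hv => ?_
        have hv' : v ∈ Finset.univ \ (M ∪ B) := by
          simp only [Finset.mem_sdiff, Finset.mem_union, Finset.mem_insert] at hv ⊢
          tauto
        have hvx : v ≠ x := by
          simp only [Finset.mem_sdiff, Finset.mem_union, Finset.mem_insert] at hv
          tauto
        refine iInf₂_le_of_le v hv' (add_le_add_right ?_ 1)
        exact ih false (insert v M) B x (by
            simp only [Finset.mem_sdiff, Finset.mem_union, Finset.mem_insert] at hx ⊢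
            tauto)
          (by have := freeM_lt hv'; omega)

lemma mono_B (E : Set (Finset V)) (t : Bool) (M B : Finset V) {x : V}
    (hx : x ∈ Finset.univ \ (M ∪ B)) :
    mbVal E t M B ≤ mbVal E t M (insert x B) :=
  mono_B_aux E _ t M B x hx le_rfl


/-- A vertex lying in no target edge: its ownership is irrelevant. -/
lemma junk_transfer (E : Set (Finset V)) {x : V} (hx : ∀ e ∈ E, x ∉ e) :
    ∀ (t : Bool) (M B : Finset V),
      mbVal E t (insert x M) B = mbVal E t M (insert x B) := by
  have hwin : ∀ M : Finset V, (∃ e ∈ E, e ⊆ insert x M) ↔ (∃ e ∈ E, e ⊆ M) := by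
    intro M
    constructor
    · rintro ⟨e, he, hsub⟩
      refine ⟨e, he, fun y hy => ?_⟩
      rcases Finset.mem_insert.mp (hsub hy) with h | h
      · exact absurd (h ▸ hy) (hx e he)
      · exact h
    · rintro ⟨e, he, hsub⟩
      exact ⟨e, he, hsub.trans (Finset.subset_insert _ _)⟩
  have hfree : ∀ M B : Finset V, insert x M ∪ B = M ∪ insert x B := by
    intro M B
    rw [Finset.insert_union, Finset.union_insert]
  have main : ∀ (n : ℕ) (t : Bool) (M B : Finset V),
      (Finset.univ \ (M ∪ insert x B)).card = n →
      mbVal E t (insert x M) B = mbVal E t M (insert x B) := by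
    intro n
    induction n using Nat.strong_induction_on with
    | _ n ih =>
      intro t M B hn
      cases t
      · -- false
        rw [mbVal, mbVal]
        simp only [hwin, hfree]
        by_cases hw : ∃ e ∈ E, e ⊆ M
        · rw [if_pos hw, if_pos hw]
        · rw [if_neg hw, if_neg hw]
          by_cases hemp : Finset.univ \ (M ∪ insert x B) = ∅
          · rw [if_pos hemp, if_pos hemp]
          · rw [if_neg hemp, if_neg hemp]
            refine iSup_congr fun b => ?_
            by_cases hb : b ∈ Finset.univ \ (M ∪ insert x B)
            · rw [iSup_pos hb, iSup_pos hb]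
              have hbfree : b ∈ Finset.univ \ (M ∪ B) := by
                simp only [Finset.mem_sdiff, Finset.mem_union, Finset.mem_insert] at hb ⊢
                tauto
              have hlt : (Finset.univ \ (M ∪ insert x (insert b B))).card < n := by
                rw [← hn, Finset.insert_comm]
                exact freeB_lt hb
              have : mbVal E true (insert x M) (insert b B)
                  = mbVal E true M (insert x (insert b B)) :=
                ih _ hlt true M (insert b B) rfl
              rw [this, Finset.insert_comm]
            · rw [iSup_neg hb, iSup_neg hb]
      · -- true
        rw [mbVal, mbVal]
        simp only [hwin, hfree]
        by_cases hw : ∃ e ∈ E, e ⊆ M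
        · rw [if_pos hw, if_pos hw]
        · rw [if_neg hw, if_neg hw]
          refine iInf_congr fun v => ?_
          by_cases hv : v ∈ Finset.univ \ (M ∪ insert x B)
          · rw [iInf_pos hv, iInf_pos hv]
            have hvfree : v ∈ Finset.univ \ (M ∪ insert x B) := hv
            have : mbVal E false (insert v (insert x M)) B
                = mbVal E false (insert x (insert v M)) B := by
              rw [Finset.insert_comm]
            rw [this,
              ih _ (by rw [← hn]; exact freeM_lt hvfree) false (insert v M) B rfl]
          · rw [iInf_neg hv, iInf_neg hv]
  intro t M B
  exact main _ t M B rfl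


lemma win_insert_iff (E : Set (Finset V)) {x : V} (hx : ∀ e ∈ E, x ∉ e) (M : Finset V) :
    (∃ e ∈ E, e ⊆ insert x M) ↔ (∃ e ∈ E, e ⊆ M) := by
  constructor
  · rintro ⟨e, he, hsub⟩
    refine ⟨e, he, fun y hy => ?_⟩
    rcases Finset.mem_insert.mp (hsub hy) with h | h
    · exact absurd (h ▸ hy) (hx e he)
    · exact h
  · rintro ⟨e, he, hsub⟩
    exact ⟨e, he, hsub.trans (Finset.subset_insert _ _)⟩

lemma step_true (E : Set (Finset V)) {M B : Finset V} {v : V}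
    (hw : ¬ ∃ e ∈ E, e ⊆ M) (hv : v ∈ Finset.univ \ (M ∪ B)) :
    mbVal E true M B ≤ 1 + mbVal E false (insert v M) B := by
  rw [mbVal, if_neg hw]
  exact iInf₂_le v hv

lemma true_le_false (E : Set (Finset V)) (M B : Finset V) :
    mbVal E true M B ≤ mbVal E false M B := by
  by_cases hw : ∃ e ∈ E, e ⊆ M
  · rw [mbVal, if_pos hw]; exact zero_le
  · conv_rhs => rw [mbVal]
    rw [if_neg hw]
    by_cases hemp : Finset.univ \ (M ∪ B) = ∅
    · rw [if_pos hemp]; exact le_top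
    · rw [if_neg hemp]
      obtain ⟨b₀, hb₀⟩ := Finset.nonempty_iff_ne_empty.mpr hemp
      exact le_trans (mono_B E true M B hb₀) (le_iSup₂ (f := fun b _ => mbVal E true M (insert b B)) b₀ hb₀)

lemma junk_M_ge (E : Set (Finset V)) {x : V} (hx : ∀ e ∈ E, x ∉ e) :
    ∀ (t : Bool) (M B : Finset V), x ∈ Finset.univ \ (M ∪ B) →
      mbVal E t M B ≤ mbVal E t (insert x M) B := by
  have main : ∀ (n : ℕ) (t : Bool) (M B : Finset V), (Finset.univ \ (M ∪ B)).card = n →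
      x ∈ Finset.univ \ (M ∪ B) → mbVal E t M B ≤ mbVal E t (insert x M) B := by
    intro n
    induction n using Nat.strong_induction_on with
    | _ n ih =>
      intro t M B hn hxf
      have hxM : x ∉ M := by
        simp only [Finset.mem_sdiff, Finset.mem_union] at hxf; tauto
      cases t
      · -- false
        rw [mbVal, mbVal]
        simp only [win_insert_iff E hx]
        by_cases hw : ∃ e ∈ E, e ⊆ M
        · rw [if_pos hw]; exact zero_le
        · rw [if_neg hw, if_neg hw]
          have hne : Finset.univ \ (M ∪ B) ≠ ∅ :=
            Finset.nonempty_iff_ne_empty.mp ⟨x, hxf⟩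
          rw [if_neg hne]
          by_cases hR : Finset.univ \ (insert x M ∪ B) = ∅
          · rw [if_pos hR]; exact le_top
          · rw [if_neg hR]
            refine iSup₂_le fun b hb => ?_
            by_cases hbx : b = x
            · subst hbx
              rw [← junk_transfer E hx true M B]
              obtain ⟨b', hb'⟩ := Finset.nonempty_iff_ne_empty.mpr hR
              exact le_trans (mono_B E true (insert b M) B hb')
                (le_iSup₂ (f := fun b'' _ => mbVal E true (insert b M) (insert b'' B)) b' hb')
            · have hb2 : b ∈ Finset.univ \ (insert x M ∪ B) := by
                simp only [Finset.mem_sdiff, Finset.mem_union, Finset.mem_insert] at hb ⊢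
                tauto
              refine le_trans (ih _ (by rw [← hn]; exact freeB_lt hb) true M (insert b B) rfl
                (by simp only [Finset.mem_sdiff, Finset.mem_union, Finset.mem_insert] at hxf ⊢
                    tauto)) ?_
              exact le_iSup₂ (f := fun b'' _ => mbVal E true (insert x M) (insert b'' B)) b hb2
      · -- true
        rw [mbVal, mbVal]
        simp only [win_insert_iff E hx]
        by_cases hw : ∃ e ∈ E, e ⊆ M
        · rw [if_pos hw]; exact zero_le
        · rw [if_neg hw, if_neg hw]
          refine le_iInf₂ fun v hv => ?_
          have hv' : v ∈ Finset.univ \ (M ∪ B) := by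
            simp only [Finset.mem_sdiff, Finset.mem_union, Finset.mem_insert] at hv ⊢
            tauto
          have hvx : v ≠ x := by
            simp only [Finset.mem_sdiff, Finset.mem_union, Finset.mem_insert] at hv
            tauto
          refine iInf₂_le_of_le v hv' (add_le_add_right ?_ 1)
          rw [Finset.insert_comm]
          exact ih _ (by rw [← hn]; exact freeM_lt hv') false (insert v M) B rfl
            (by simp only [Finset.mem_sdiff, Finset.mem_union, Finset.mem_insert] at hxf ⊢
                tauto)
  intro t M B hxf
  exact main _ t M B rfl hxf

lemma junk_M_le (E : Set (Finset V)) {x : V} (hx : ∀ e ∈ E, x ∉ e) :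
    ∀ (t : Bool) (M B : Finset V), x ∈ Finset.univ \ (M ∪ B) →
      mbVal E t (insert x M) B ≤ mbVal E t M B := by
  have hfr : ∀ M B : Finset V, insert x M ∪ B = M ∪ insert x B := by
    intro M B; rw [Finset.insert_union, Finset.union_insert]
  have main : ∀ (n : ℕ) (t : Bool) (M B : Finset V), (Finset.univ \ (M ∪ B)).card = n →
      x ∈ Finset.univ \ (M ∪ B) → mbVal E t (insert x M) B ≤ mbVal E t M B := by
    intro n
    induction n using Nat.strong_induction_on with
    | _ n ih =>
      intro t M B hn hxf
      cases t
      · -- false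
        by_cases hw : ∃ e ∈ E, e ⊆ M
        · conv_rhs => rw [mbVal]
          rw [if_pos hw]
          rw [mbVal, if_pos ((win_insert_iff E hx M).mpr hw)]
        · conv_lhs => rw [mbVal]
          rw [if_neg (fun h => hw ((win_insert_iff E hx M).mp h))]
          conv_rhs => rw [mbVal]
          rw [if_neg hw,
            if_neg (Finset.nonempty_iff_ne_empty.mp ⟨x, hxf⟩)]
          by_cases hemp : Finset.univ \ (insert x M ∪ B) = ∅
          · rw [if_pos hemp]
            -- RHS sup contains the term at x which is ⊤
            refine le_trans le_top (le_trans ?_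
              (le_iSup₂ (f := fun b _ => mbVal E true M (insert b B)) x hxf))
            rw [mbVal, if_neg hw]
            refine le_iInf fun v => le_iInf fun hv => ?_
            exfalso
            rw [← hfr M B] at hv
            rw [hemp] at hv
            exact Finset.notMem_empty v hv
          · rw [if_neg hemp]
            refine iSup₂_le fun b hb => ?_
            have hb' : b ∈ Finset.univ \ (M ∪ B) := by
              simp only [Finset.mem_sdiff, Finset.mem_union, Finset.mem_insert] at hb ⊢
              tauto
            have hbx : b ≠ x := by
              simp only [Finset.mem_sdiff, Finset.mem_union, Finset.mem_insert] at hb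
              tauto
            refine le_trans (ih _ (by rw [← hn]; exact freeB_lt hb') true M (insert b B) rfl
              (by simp only [Finset.mem_sdiff, Finset.mem_union, Finset.mem_insert] at hxf ⊢
                  tauto)) ?_
            exact le_iSup₂ (f := fun b'' _ => mbVal E true M (insert b'' B)) b hb'
      · -- true
        by_cases hw : ∃ e ∈ E, e ⊆ M
        · conv_rhs => rw [mbVal]
          rw [if_pos hw]
          rw [mbVal, if_pos ((win_insert_iff E hx M).mpr hw)]
        · conv_rhs => rw [mbVal]
          rw [if_neg hw]
          refine le_iInf₂ fun v hv => ?_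
          by_cases hvx : v = x
          · subst hvx
            refine le_trans (true_le_false E (insert v M) B) ?_
            exact le_add_self
          · have hv2 : v ∈ Finset.univ \ (insert x M ∪ B) := by
              simp only [Finset.mem_sdiff, Finset.mem_union, Finset.mem_insert] at hv ⊢
              tauto
            refine le_trans (step_true E
              (fun h => hw ((win_insert_iff E hx M).mp h)) hv2) (add_le_add_right ?_ 1)
            rw [Finset.insert_comm]
            exact ih _ (by rw [← hn]; exact freeM_lt hv) false (insert v M) B rfl
              (by simp only [Finset.mem_sdiff, Finset.mem_union, Finset.mem_insert] at hxf ⊢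
                  tauto)
  intro t M B hxf
  exact main _ t M B rfl hxf

lemma junk_B_eq (E : Set (Finset V)) {x : V} (hx : ∀ e ∈ E, x ∉ e)
    (t : Bool) (M B : Finset V) (hxf : x ∈ Finset.univ \ (M ∪ B)) :
    mbVal E t M (insert x B) = mbVal E t M B := by
  refine le_antisymm ?_ (mono_B E t M B hxf)
  rw [← junk_transfer E hx t M B]
  exact junk_M_le E hx t M B hxf


/-- Edges meeting a Breaker stone are dead and can be removed. -/
lemma dead_single (E : Set (Finset V)) {x : V} :
    ∀ (t : Bool) (M B : Finset V), x ∈ B → Disjoint M B →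
      mbVal E t M B = mbVal {e ∈ E | x ∉ e} t M B := by
  have main : ∀ (n : ℕ) (t : Bool) (M B : Finset V), (Finset.univ \ (M ∪ B)).card = n →
      x ∈ B → Disjoint M B → mbVal E t M B = mbVal {e ∈ E | x ∉ e} t M B := by
    intro n
    induction n using Nat.strong_induction_on with
    | _ n ih =>
      intro t M B hn hxB hMB
      have hwiff : (∃ e ∈ E, e ⊆ M) ↔ (∃ e ∈ {e ∈ E | x ∉ e}, e ⊆ M) := by
        constructor
        · rintro ⟨e, he, hsub⟩
          refine ⟨e, ⟨he, fun hxe => ?_⟩, hsub⟩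
          exact (Finset.disjoint_left.mp hMB) (hsub hxe) hxB
        · rintro ⟨e, he, hsub⟩
          exact ⟨e, he.1, hsub⟩
      cases t
      · rw [mbVal, mbVal]
        by_cases hw : ∃ e ∈ E, e ⊆ M
        · rw [if_pos hw, if_pos (hwiff.mp hw)]
        · rw [if_neg hw, if_neg (fun h => hw (hwiff.mpr h))]
          by_cases hemp : Finset.univ \ (M ∪ B) = ∅
          · rw [if_pos hemp, if_pos hemp]
          · rw [if_neg hemp, if_neg hemp]
            refine iSup_congr fun b => ?_
            by_cases hb : b ∈ Finset.univ \ (M ∪ B)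
            · rw [iSup_pos hb, iSup_pos hb]
              have hbM : b ∉ M := by
                simp only [Finset.mem_sdiff, Finset.mem_union] at hb; tauto
              exact ih _ (by rw [← hn]; exact freeB_lt hb) true M (insert b B) rfl
                (Finset.mem_insert_of_mem hxB)
                (Finset.disjoint_insert_right.mpr ⟨hbM, hMB⟩)
            · rw [iSup_neg hb, iSup_neg hb]
      · rw [mbVal, mbVal]
        by_cases hw : ∃ e ∈ E, e ⊆ M
        · rw [if_pos hw, if_pos (hwiff.mp hw)]
        · rw [if_neg hw, if_neg (fun h => hw (hwiff.mpr h))]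
          refine iInf_congr fun v => ?_
          by_cases hv : v ∈ Finset.univ \ (M ∪ B)
          · rw [iInf_pos hv, iInf_pos hv]
            have hvB : v ∉ B := by
              simp only [Finset.mem_sdiff, Finset.mem_union] at hv; tauto
            rw [ih _ (by rw [← hn]; exact freeM_lt hv) false (insert v M) B rfl hxB
              (Finset.disjoint_insert_left.mpr ⟨hvB, hMB⟩)]
          · rw [iInf_neg hv, iInf_neg hv]
  intro t M B hxB hMB
  exact main _ t M B rfl hxB hMB

lemma min_one_add {a c c' : ℕ∞} (hcc : c ≤ c') : min (1 + a) c ≤ 1 + min a c' := by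
  rcases min_cases a c' with ⟨h, _⟩ | ⟨h, _⟩
  · rw [h]; exact min_le_left _ _
  · rw [h]
    exact le_trans (min_le_right _ _) (le_trans hcc le_add_self)

/-- Split lemma: Breaker defending two vertex-disjoint families. -/
lemma split_aux (F G : Set (Finset V)) {M B : Finset V} {v : V}
    (hv : v ∈ Finset.univ \ (M ∪ B))
    (hvG : ∀ e ∈ G, v ∉ e)
    (hwF : ¬ ∃ e ∈ F, e ⊆ M)
    (hwv : ¬ ∃ e ∈ F ∪ G, e ⊆ insert v M)
    (hemp : Finset.univ \ (insert v M ∪ B) ≠ ∅)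
    (ih : ∀ b ∈ Finset.univ \ (insert v M ∪ B),
      min (mbVal F true (insert v M) (insert b B)) (mbVal G true (insert v M) (insert b B))
        ≤ mbVal (F ∪ G) true (insert v M) (insert b B)) :
    min (mbVal F true M B) (mbVal G true M B)
      ≤ 1 + mbVal (F ∪ G) false (insert v M) B := by
  have hwvF : ¬ ∃ e ∈ F, e ⊆ insert v M := fun ⟨e, he, h⟩ => hwv ⟨e, Set.mem_union_left _ he, h⟩
  have hFfalse : mbVal F false (insert v M) B
      = ⨆ b ∈ Finset.univ \ (insert v M ∪ B), mbVal F true (insert v M) (insert b B) := by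
    rw [mbVal, if_neg hwvF, if_neg hemp]
  obtain ⟨b₀, hb₀, hb₀eq⟩ := Finset.exists_mem_eq_sup (Finset.univ \ (insert v M ∪ B))
    (Finset.nonempty_iff_ne_empty.mpr hemp) (fun b => mbVal F true (insert v M) (insert b B))
  have h1 : mbVal F false (insert v M) B = mbVal F true (insert v M) (insert b₀ B) := by
    rw [hFfalse, ← Finset.sup_eq_iSup, hb₀eq]
  have h2 : mbVal (F ∪ G) true (insert v M) (insert b₀ B)
      ≤ mbVal (F ∪ G) false (insert v M) B := by
    conv_rhs => rw [mbVal]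
    rw [if_neg hwv, if_neg hemp]
    exact le_iSup₂ (f := fun b _ => mbVal (F ∪ G) true (insert v M) (insert b B)) b₀ hb₀
  have h4 : mbVal G true M B ≤ mbVal G true (insert v M) (insert b₀ B) :=
    le_trans (junk_M_ge G hvG true M B hv) (mono_B G true (insert v M) B hb₀)
  have h5 : mbVal F true M B ≤ 1 + mbVal F false (insert v M) B := step_true F hwF hv
  calc min (mbVal F true M B) (mbVal G true M B)
      ≤ min (1 + mbVal F false (insert v M) B) (mbVal G true M B) :=
        min_le_min h5 le_rfl
    _ = min (1 + mbVal F true (insert v M) (insert b₀ B)) (mbVal G true M B) := by rw [h1]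
    _ ≤ 1 + min (mbVal F true (insert v M) (insert b₀ B))
          (mbVal G true (insert v M) (insert b₀ B)) := min_one_add h4
    _ ≤ 1 + mbVal (F ∪ G) true (insert v M) (insert b₀ B) :=
        add_le_add_right (ih b₀ hb₀) 1
    _ ≤ 1 + mbVal (F ∪ G) false (insert v M) B := add_le_add_right h2 1

lemma split (E₁ E₂ : Set (Finset V))
    (hdisj : ∀ e₁ ∈ E₁, ∀ e₂ ∈ E₂, ∀ v, v ∈ e₁ → v ∉ e₂) :
    ∀ (M B : Finset V),
      min (mbVal E₁ true M B) (mbVal E₂ true M B) ≤ mbVal (E₁ ∪ E₂) true M B := by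
  have main : ∀ (n : ℕ) (M B : Finset V), (Finset.univ \ (M ∪ B)).card = n →
      min (mbVal E₁ true M B) (mbVal E₂ true M B) ≤ mbVal (E₁ ∪ E₂) true M B := by
    intro n
    induction n using Nat.strong_induction_on with
    | _ n ih =>
      intro M B hn
      conv_rhs => rw [mbVal]
      by_cases hw : ∃ e ∈ E₁ ∪ E₂, e ⊆ M
      · rw [if_pos hw]
        rcases hw with ⟨e, he, hsub⟩
        rcases he with he | he
        · refine le_trans (min_le_left _ _) ?_
          rw [mbVal, if_pos ⟨e, he, hsub⟩]
        · refine le_trans (min_le_right _ _) ?_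
          rw [mbVal, if_pos ⟨e, he, hsub⟩]
      · rw [if_neg hw]
        have hw1 : ¬ ∃ e ∈ E₁, e ⊆ M := fun ⟨e, he, h⟩ => hw ⟨e, Set.mem_union_left _ he, h⟩
        have hw2 : ¬ ∃ e ∈ E₂, e ⊆ M := fun ⟨e, he, h⟩ => hw ⟨e, Set.mem_union_right _ he, h⟩
        refine le_iInf fun v => le_iInf fun hv => ?_
        by_cases hwv : ∃ e ∈ E₁ ∪ E₂, e ⊆ insert v M
        · rcases hwv with ⟨e, he, hsub⟩
          rcases he with he | he
          · have : mbVal E₁ false (insert v M) B = 0 := by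
              rw [mbVal, if_pos ⟨e, he, hsub⟩]
            refine le_trans (min_le_left _ _) (le_trans (step_true E₁ hw1 hv) ?_)
            rw [this, add_zero]
            exact le_add_right le_rfl
          · have : mbVal E₂ false (insert v M) B = 0 := by
              rw [mbVal, if_pos ⟨e, he, hsub⟩]
            refine le_trans (min_le_right _ _) (le_trans (step_true E₂ hw2 hv) ?_)
            rw [this, add_zero]
            exact le_add_right le_rfl
        · by_cases hemp : Finset.univ \ (insert v M ∪ B) = ∅
          · have : mbVal (E₁ ∪ E₂) false (insert v M) B = ⊤ := by
              rw [mbVal, if_neg hwv, if_pos hemp]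
            rw [this]
            exact le_trans le_top (le_of_eq (by simp))
          · by_cases hv2 : ∃ e ∈ E₂, v ∈ e
            · have hvG : ∀ e ∈ E₁, v ∉ e := by
                intro e₁ he₁ hv₁
                obtain ⟨e₂, he₂, hve₂⟩ := hv2
                exact hdisj e₁ he₁ e₂ he₂ v hv₁ hve₂
              rw [Set.union_comm E₁ E₂, min_comm]
              refine split_aux E₂ E₁ hv hvG hw2
                (by rw [Set.union_comm]; exact hwv) hemp ?_
              intro b hb
              rw [Set.union_comm E₂ E₁, min_comm]
              have hlt : (Finset.univ \ (insert v M ∪ insert b B)).card < n := by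
                rw [← hn]
                exact lt_trans (freeB_lt (M := insert v M) hb) (freeM_lt hv)
              exact ih _ hlt (insert v M) (insert b B) rfl
            · have hvG : ∀ e ∈ E₂, v ∉ e := fun e he hv' => hv2 ⟨e, he, hv'⟩
              refine split_aux E₁ E₂ hv hvG hw1 hwv hemp ?_
              intro b hb
              have hlt : (Finset.univ \ (insert v M ∪ insert b B)).card < n := by
                rw [← hn]
                exact lt_trans (freeB_lt (M := insert v M) hb) (freeM_lt hv)
              exact ih _ hlt (insert v M) (insert b B) rfl
  intro M B
  exact main _ M B rfl


end MBAux

section Glue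

variable {V : Type} [Fintype V]

lemma mem_closedNbhd (T : SimpleGraph V) (u x : V) :
    x ∈ closedNbhdFinset T u ↔ (x = u ∨ T.Adj u x) := by
  simp [closedNbhdFinset]

theorem stmt_6' (T : SimpleGraph V) (hT : T.IsTree)
    (h2 : 2 ≤ gammaSMB' T) (hfin : gammaSMB' T < ⊤) (s₁ : V)
    (hopt : 1 + mbVal (nbhdHyp T) false {s₁} ∅ = gammaSMB' T) :
    ∃ d₁' : V, T.Adj s₁ d₁' ∧
      mbVal (nbhdHyp T) true {s₁} {d₁'} = mbVal (nbhdHyp T) false {s₁} ∅ := by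
  classical
  set E := nbhdHyp T with hE
  set X := mbVal E false {s₁} ∅ with hX
  have hγ : gammaSMB' T = 1 + X := hopt.symm
  have hγdef : gammaSMB' T = mbVal E true ∅ ∅ := rfl
  have hnw : ¬ ∃ e ∈ E, e ⊆ ({s₁} : Finset V) := by
    intro h
    have hX0 : X = 0 := by rw [hX, mbVal, if_pos h]
    rw [hX0] at hγ
    rw [hγ] at h2
    norm_num at h2
  have hfr : Finset.univ \ (({s₁} : Finset V) ∪ ∅) ≠ ∅ := by
    intro h
    have hXT : X = ⊤ := by rw [hX, mbVal, if_neg hnw, if_pos h]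
    rw [hXT] at hγ
    rw [hγ] at hfin
    simp at hfin
  have hXsup : X = ⨆ v ∈ Finset.univ \ (({s₁} : Finset V) ∪ ∅),
      mbVal E true {s₁} (insert v ∅) := by
    rw [hX]
    conv_lhs => rw [mbVal]
    rw [if_neg hnw, if_neg hfr]
  obtain ⟨d, hd, hdeq⟩ := Finset.exists_mem_eq_sup
    (Finset.univ \ (({s₁} : Finset V) ∪ ∅))
    (Finset.nonempty_iff_ne_empty.mpr hfr)
    (fun v => mbVal E true {s₁} (insert v ∅))
  have hdX : mbVal E true {s₁} {d} = X := by
    rw [hXsup, ← Finset.sup_eq_iSup, hdeq]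
    rfl
  have hds : d ≠ s₁ := by
    simp only [Finset.union_empty, Finset.mem_sdiff, Finset.mem_univ, true_and,
      Finset.mem_singleton] at hd
    exact hd
  have hle : ∀ v : V, v ≠ s₁ → mbVal E true {s₁} {v} ≤ X := by
    intro v hv
    rw [hXsup]
    have hvmem : v ∈ Finset.univ \ (({s₁} : Finset V) ∪ ∅) := by
      simp [hv]
    exact le_iSup₂ (f := fun v _ => mbVal E true {s₁} (insert v ∅)) v hvmem
  by_cases hadj : T.Adj s₁ d
  · exact ⟨d, hadj, hdX⟩
  -- d is not adjacent (and ≠ s₁): find the neighbor p of s₁ on the s₁–d path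
  obtain ⟨w₀⟩ := hT.isConnected.preconnected s₁ d
  obtain ⟨pw, hpw⟩ := w₀.toPath
  cases pw with
  | nil => exact absurd rfl hds.symm
  | @cons _ p _ hadj' tail =>
    -- hadj' : T.Adj s₁ p, tail : T.Walk p d
    have hps₁ : p ≠ s₁ := (hadj'.ne).symm
    have key : ∀ w : T.Walk s₁ d, p ∈ w.support := by
      intro w
      have hq : w.toPath = (⟨SimpleGraph.Walk.cons hadj' tail, hpw⟩ : T.Path s₁ d) :=
        hT.IsAcyclic.path_unique _ _
      have hp1 : p ∈ (w.toPath : T.Walk s₁ d).support := by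
        rw [hq]
        simp only [SimpleGraph.Walk.support_cons]
        exact List.mem_cons_of_mem _ (SimpleGraph.Walk.start_mem_support tail)
      exact SimpleGraph.Walk.support_toPath_subset w hp1
    -- the s₁-side component of T - p
    set A : Set V := {v | ∃ w : T.Walk s₁ v, p ∉ w.support} with hA
    have hs₁A : s₁ ∈ A := ⟨SimpleGraph.Walk.nil, by simp [hps₁]⟩
    have hdA : d ∉ A := fun ⟨w, hw⟩ => hw (key w)
    have hAext : ∀ {u x : V}, u ∈ A → T.Adj u x → x ≠ p → x ∈ A := by
      rintro u x ⟨w, hw⟩ hux hxp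
      exact ⟨w.concat hux, by
        rw [SimpleGraph.Walk.support_concat]
        simp only [List.concat_eq_append, List.mem_append, List.mem_singleton]
        rintro (h | h)
        · exact hw h
        · exact hxp h.symm⟩
    -- edge families
    set E₁ : Set (Finset V) :=
      {e | ∃ u, u ∈ A ∧ p ∉ closedNbhdFinset T u ∧ e = closedNbhdFinset T u} with hE₁
    set E₂ : Set (Finset V) :=
      {e | ∃ u, u ∉ A ∧ u ≠ p ∧ p ∉ closedNbhdFinset T u ∧ e = closedNbhdFinset T u} with hE₂
    have hE₁sub : E₁ ⊆ E := by
      rintro e ⟨u, _, _, rfl⟩; exact ⟨u, rfl⟩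
    have hE₂sub : E₂ ⊆ E := by
      rintro e ⟨u, _, _, _, rfl⟩; exact ⟨u, rfl⟩
    have hsupp₁ : ∀ e ∈ E₁, ∀ x ∈ e, x ∈ A := by
      rintro e ⟨u, huA, hpu, rfl⟩ x hx
      rcases (mem_closedNbhd T u x).mp hx with rfl | h
      · exact huA
      · refine hAext huA h fun hxp => ?_
        exact hpu ((mem_closedNbhd T u p).mpr (Or.inr (hxp ▸ h)))
    have hsupp₂ : ∀ e ∈ E₂, ∀ x ∈ e, x ∉ A ∧ x ≠ p := by
      rintro e ⟨u, huA, hup, hpu, rfl⟩ x hx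
      rcases (mem_closedNbhd T u x).mp hx with rfl | h
      · exact ⟨huA, hup⟩
      · have hxp : x ≠ p := fun hxp =>
          hpu ((mem_closedNbhd T u p).mpr (Or.inr (hxp ▸ h)))
        refine ⟨fun hxA => huA (hAext hxA h.symm hup), hxp⟩
    have hdisj : ∀ e₁ ∈ E₁, ∀ e₂ ∈ E₂, ∀ v, v ∈ e₁ → v ∉ e₂ := by
      intro e₁ he₁ e₂ he₂ v hv₁ hv₂
      exact (hsupp₂ e₂ he₂ v hv₂).1 (hsupp₁ e₁ he₁ v hv₁)
    have hEeq : {e ∈ E | p ∉ e} = E₁ ∪ E₂ := by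
      ext e
      constructor
      · rintro ⟨⟨u, rfl⟩, hpe⟩
        by_cases huA : u ∈ A
        · exact Or.inl ⟨u, huA, hpe, rfl⟩
        · have hup : u ≠ p := by
            rintro rfl
            exact hpe ((mem_closedNbhd T u u).mpr (Or.inl rfl))
          exact Or.inr ⟨u, huA, hup, hpe, rfl⟩
      · rintro (⟨u, _, hpu, rfl⟩ | ⟨u, _, _, hpu, rfl⟩)
        · exact ⟨⟨u, rfl⟩, hpu⟩
        · exact ⟨⟨u, rfl⟩, hpu⟩
    have hjunkp : ∀ e ∈ E₁ ∪ E₂, p ∉ e := by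
      intro e he
      rw [← hEeq] at he
      exact he.2
    have hjunkd : ∀ e ∈ E₁, d ∉ e := fun e he hd' => hdA (hsupp₁ e he d hd')
    have hjunks : ∀ e ∈ E₂, s₁ ∉ e := fun e he hs' => (hsupp₂ e he s₁ hs').1 hs₁A
    have hpfree : p ∈ Finset.univ \ (({s₁} : Finset V) ∪ ∅) := by simp [hps₁]
    have hs₁free : s₁ ∈ Finset.univ \ ((∅ : Finset V) ∪ ∅) := by simp
    have c1 : mbVal E true {s₁} {p} = mbVal {e ∈ E | p ∉ e} true {s₁} {p} :=
      MBAux.dead_single E true {s₁} {p} (Finset.mem_singleton_self p)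
        (Finset.disjoint_singleton.mpr (Ne.symm hps₁))
    have c2 : mbVal {e ∈ E | p ∉ e} true {s₁} {p} = mbVal (E₁ ∪ E₂) true {s₁} {p} := by
      rw [hEeq]
    have c3 : mbVal (E₁ ∪ E₂) true {s₁} (insert p ∅) = mbVal (E₁ ∪ E₂) true {s₁} ∅ :=
      MBAux.junk_B_eq (E₁ ∪ E₂) hjunkp true {s₁} ∅ hpfree
    have c5 : X ≤ mbVal E₁ true {s₁} ∅ := by
      have e2 : mbVal E₁ true {s₁} (insert d ∅) = mbVal E₁ true {s₁} ∅ :=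
        MBAux.junk_B_eq E₁ hjunkd true {s₁} ∅ hd
      calc X = mbVal E true {s₁} {d} := hdX.symm
        _ ≤ mbVal E₁ true {s₁} {d} := MBAux.mono_edges hE₁sub true {s₁} {d}
        _ = mbVal E₁ true {s₁} ∅ := e2
    have c6 : X ≤ mbVal E₂ true {s₁} ∅ := by
      have e2 : mbVal E₂ true ∅ ∅ ≤ mbVal E₂ true (insert s₁ ∅) ∅ :=
        MBAux.junk_M_ge E₂ hjunks true ∅ ∅ hs₁free
      have e0 : X ≤ mbVal E true ∅ ∅ := by
        rw [← hγdef, hγ]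
        exact le_add_self
      calc X ≤ mbVal E true ∅ ∅ := e0
        _ ≤ mbVal E₂ true ∅ ∅ := MBAux.mono_edges hE₂sub true ∅ ∅
        _ ≤ mbVal E₂ true {s₁} ∅ := e2
    have hge : X ≤ mbVal E true {s₁} {p} := by
      rw [c1, c2]
      calc X ≤ min (mbVal E₁ true {s₁} ∅) (mbVal E₂ true {s₁} ∅) := le_min c5 c6
        _ ≤ mbVal (E₁ ∪ E₂) true {s₁} ∅ := MBAux.split E₁ E₂ hdisj {s₁} ∅
        _ = mbVal (E₁ ∪ E₂) true {s₁} {p} := c3.symm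
    exact ⟨p, hadj', le_antisymm (hle p hps₁) hge⟩

end Glue


/-- Let `T` be a tree with no perfect matching on which Staller wins the
Staller-start Maker–Breaker domination game but needs at least two moves
(`2 ≤ γ'_SMB(T) < ∞`).  If `s₁` is an optimal first move of Staller, then
Dominator has an optimal response `d₁'` adjacent to `s₁` in `T`. -/
theorem stmt_6 {V : Type} [Fintype V] (T : SimpleGraph V) (hT : T.IsTree)
    (hpm : ¬ ∃ M : T.Subgraph, M.IsPerfectMatching)
    (h2 : 2 ≤ gammaSMB' T) (hfin : gammaSMB' T < ⊤) (s₁ : V)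
    (hopt : 1 + mbVal (nbhdHyp T) false {s₁} ∅ = gammaSMB' T) :
    ∃ d₁' : V, T.Adj s₁ d₁' ∧
      mbVal (nbhdHyp T) true {s₁} {d₁'} = mbVal (nbhdHyp T) false {s₁} ∅ := by
  exact stmt_6' T hT h2 hfin s₁ hopt
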